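/- Let (aₖ), (bₖ), (cₖ), (dₖ) (k ≥ 1) be real sequences with aₖ = dₖ = 0 for all odd k ≥ 1 and bₖ = cₖ = 0 for all even k ≥ 2. In the 2×2 matrices over the field ℝ((λ)) of formal Laurent series, define Φᵗ := I + Σ_{k≥1} λᵏ·[[aₖ, bₖ],[cₖ, dₖ]] (entries formal power series), Φˢ := [[1, −(s/4)·λ⁻¹],[0, 1]], and, for s ∈ ℝ with 1 + s·c₁/4 ≠ 0, Φ₋ := [[(1 + s·c₁/4)⁻¹, −(s/4)·λ⁻¹],[0, 1 + s·c₁/4]]. Then every entry of the product (Φˢ)⁻¹·Φᵗ·Φ₋ has vanishing coefficient in every negative degree, and its matrix of degree-0 coefficients is the identity matrix. (Hence F̂ := Φᵗ·Φ₋ realizes the Birkhoff/Iwasawa factorization used for the B-scroll type minimal surfaces: Φˢ and F̂ differ by a factor in the positive loop group normalized to the identity at λ = 0.) -/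

import Mathlib

noncomputable section

/-- A formal power series regarded as a formal Laurent series. -/
def toLS : PowerSeries ℝ →+* LaurentSeries ℝ := HahnSeries.ofPowerSeries ℤ ℝ

lemma toLS_coeff (f : PowerSeries ℝ) (n : ℤ) :
    (toLS f).coeff n = if 0 ≤ n then PowerSeries.coeff n.toNat f else 0 := by
  split_ifs with h
  · obtain ⟨m, rfl⟩ := Int.eq_ofNat_of_zero_le h
    simpa [toLS] using HahnSeries.ofPowerSeries_apply_coeff f m
  · rw [toLS, HahnSeries.ofPowerSeries_apply]
    apply HahnSeries.embDomain_notin_range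
    rintro ⟨m, hm⟩
    simp only [Nat.castOrderEmbedding_apply] at hm
    omega

lemma coeff_single_mul (m : ℤ) (r : ℝ) (x : LaurentSeries ℝ) (n : ℤ) :
    (HahnSeries.single m r * x).coeff n = r * x.coeff (n - m) := by
  have := HahnSeries.coeff_single_mul_add (r := r) (x := x) (a := n - m) (b := m)
  simpa using this

lemma coeff_mul_single (m : ℤ) (r : ℝ) (x : LaurentSeries ℝ) (n : ℤ) :
    (x * HahnSeries.single m r).coeff n = x.coeff (n - m) * r := by
  have := HahnSeries.coeff_mul_single_add (r := r) (x := x) (a := n - m) (b := m)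
  simpa using this

lemma single_add_single (m : ℤ) (r r' : ℝ) :
    HahnSeries.single m r + HahnSeries.single m r' = HahnSeries.single m (r + r') := by
  ext n
  simp only [HahnSeries.coeff_add, HahnSeries.coeff_single]
  split_ifs <;> simp

/-- Birkhoff/Iwasawa factorization for the B-scroll type minimal surfaces:
(Φˢ)⁻¹·Φᵗ·Φ₋ is a positive loop normalized to the identity at λ = 0. -/
theorem bscroll_factorization (a b c d : ℕ → ℝ)
    (hodd : ∀ k : ℕ, 1 ≤ k → Odd k → a k = 0 ∧ d k = 0)
    (heven : ∀ k : ℕ, 2 ≤ k → Even k → b k = 0 ∧ c k = 0)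
    (s : ℝ) (hs : 1 + s * c 1 / 4 ≠ 0)
    (Φt Φs Φm : Matrix (Fin 2) (Fin 2) (LaurentSeries ℝ))
    (hΦt : Φt = !![toLS (PowerSeries.mk fun k => if k = 0 then 1 else a k),
                   toLS (PowerSeries.mk fun k => if k = 0 then 0 else b k);
                   toLS (PowerSeries.mk fun k => if k = 0 then 0 else c k),
                   toLS (PowerSeries.mk fun k => if k = 0 then 1 else d k)])
    (hΦs : Φs = !![1, HahnSeries.single (-1 : ℤ) (-(s / 4)); 0, 1])
    (hΦm : Φm = !![HahnSeries.single (0 : ℤ) ((1 + s * c 1 / 4)⁻¹),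
                   HahnSeries.single (-1 : ℤ) (-(s / 4));
                   0, HahnSeries.single (0 : ℤ) (1 + s * c 1 / 4)]) :
    (∀ i j : Fin 2, ∀ n : ℤ, n < 0 → ((Φs⁻¹ * Φt * Φm) i j).coeff n = 0) ∧
    (Matrix.of fun i j : Fin 2 => ((Φs⁻¹ * Φt * Φm) i j).coeff 0)
      = (1 : Matrix (Fin 2) (Fin 2) ℝ) := by
  have ha1 : a 1 = 0 := (hodd 1 le_rfl odd_one).1
  have hd1 : d 1 = 0 := (hodd 1 le_rfl odd_one).2
  have hc2 : c 2 = 0 := (heven 2 le_rfl (by decide)).2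
  have hinv : Φs⁻¹ = !![1, HahnSeries.single (-1 : ℤ) (s / 4); 0, 1] := by
    apply Matrix.inv_eq_right_inv
    rw [hΦs, Matrix.mul_fin_two, Matrix.one_fin_two]
    simp [single_add_single]
  rw [hinv, hΦt, hΦm, Matrix.mul_fin_two, Matrix.mul_fin_two]
  constructor
  · intro i j n hn
    obtain h3 | rfl | rfl : n ≤ -3 ∨ n = -2 ∨ n = -1 := by omega
    · fin_cases i <;> fin_cases j <;>
        simp [-HahnSeries.single_add, -HahnSeries.single_neg, coeff_single_mul, coeff_mul_single, toLS_coeff,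
          show ¬ (0:ℤ) ≤ n by omega, show ¬ (0:ℤ) ≤ n + 1 by omega,
          show ¬ (0:ℤ) ≤ n + 1 + 1 by omega, show ¬ (0:ℤ) ≤ n + 2 by omega]
    · fin_cases i <;> fin_cases j <;>
        norm_num [-HahnSeries.single_add, -HahnSeries.single_neg, coeff_single_mul, coeff_mul_single, toLS_coeff, PowerSeries.coeff_mk]
    · fin_cases i <;> fin_cases j <;>
        norm_num [-HahnSeries.single_add, -HahnSeries.single_neg, coeff_single_mul, coeff_mul_single, toLS_coeff, PowerSeries.coeff_mk] <;>
        ring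
  · rw [Matrix.one_fin_two]
    ext i j
    have hs' : (1 + s * c 1 * (1 / 4) : ℝ) ≠ 0 := by intro h; apply hs; linarith
    fin_cases i <;> fin_cases j
    · norm_num [-HahnSeries.single_add, -HahnSeries.single_neg, coeff_single_mul, coeff_mul_single, toLS_coeff, PowerSeries.coeff_mk]
      linear_combination mul_inv_cancel₀ hs'
    · norm_num [-HahnSeries.single_add, -HahnSeries.single_neg, coeff_single_mul, coeff_mul_single, toLS_coeff, PowerSeries.coeff_mk,
        ha1, hd1, hc2, show Int.toNat 2 = 2 from rfl]
    · norm_num [-HahnSeries.single_add, -HahnSeries.single_neg, coeff_single_mul, coeff_mul_single, toLS_coeff, PowerSeries.coeff_mk]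
    · norm_num [-HahnSeries.single_add, -HahnSeries.single_neg, coeff_single_mul, coeff_mul_single, toLS_coeff, PowerSeries.coeff_mk]
      ring
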